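/- For all natural numbers p and q with p ≥ q, (2p + 2q)! / ((2p)! · (2q)!) = ∑_{k=0}^{q} ( (p+q)! / ((p−k)! · (q−k)! · (2k)!) ) · 2^{2k}. Equivalently, the binomial coefficient C(2p+2q, 2q) equals the sum over k = 0, …, q of the multinomial coefficient (p+q choose p−k, q−k, 2k) times 4^k. -/

import Mathlib

open Nat Finset

open Polynomial in
private lemma lemA (n q : ℕ) (h : 2 * q ≤ n) :
    (2 * n).choose (2 * q)
      = ∑ k ∈ range (q + 1), n.choose (q + k) * (q + k).choose (2 * k) * 2 ^ (2 * k) := by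
  have key : ((X + 1 : Polynomial ℕ) ^ (2 * n)).coeff (2 * q) = (2 * n).choose (2 * q) := by
    rw [coeff_X_add_one_pow]; simp
  have hC2 : (C 2 : Polynomial ℕ) = 2 := by simp
  have expand : (X + 1 : Polynomial ℕ) ^ (2 * n) = ((X + C 2) * X + 1) ^ n := by
    rw [pow_mul]
    congr 1
    rw [hC2]
    ring
  rw [expand, add_pow, finset_sum_coeff] at key
  have hterm : ∀ j ∈ range (n + 1),
      (((X + C 2) * X) ^ j * (1 : Polynomial ℕ) ^ (n - j) * (n.choose j : Polynomial ℕ)).coeff (2 * q)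
        = (if j ≤ 2 * q then 2 ^ (j - (2 * q - j)) * j.choose (2 * q - j) else 0) * n.choose j := by
    intro j hj
    rw [one_pow, mul_one, mul_pow, ← C_eq_natCast, coeff_mul_C, coeff_mul_X_pow']
    split_ifs with h1
    · rw [Polynomial.coeff_X_add_C_pow]
      simp
    · rw [zero_mul]
      simp
  rw [Finset.sum_congr rfl hterm] at key
  rw [← key]
  have hsub : Finset.Ico q (2 * q + 1) ⊆ range (n + 1) := by
    intro j hj
    simp only [Finset.mem_Ico, Finset.mem_range] at hj ⊢
    omega
  rw [← Finset.sum_subset hsub]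
  · rw [Finset.sum_Ico_eq_sum_range, show 2 * q + 1 - q = q + 1 by omega]
    refine Finset.sum_congr rfl fun k hk => ?_
    simp only [Finset.mem_range] at hk
    have hk' : k ≤ q := by omega
    rw [if_pos (by omega : q + k ≤ 2 * q)]
    rw [show 2 * q - (q + k) = q - k by omega, show q + k - (q - k) = 2 * k by omega]
    rw [show (q + k).choose (q - k) = (q + k).choose (2 * k) by
      rw [← Nat.choose_symm (by omega : q - k ≤ q + k), show q + k - (q - k) = 2 * k by omega]]
    ring
  · intro j hj hj'
    simp only [Finset.mem_range, Finset.mem_Ico] at hj hj'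
    by_cases h1 : j ≤ 2 * q
    · rw [if_pos h1, Nat.choose_eq_zero_of_lt (by omega : j < 2 * q - j)]
      ring
    · rw [if_neg h1, zero_mul]

theorem multinomial_identity_even (p q : ℕ) (hpq : q ≤ p) :
    ((2 * p + 2 * q)! : ℚ) / ((2 * p)! * (2 * q)!)
      = ∑ k ∈ Finset.range (q + 1),
          ((p + q)! : ℚ) / ((p - k)! * (q - k)! * (2 * k)!) * 2 ^ (2 * k) := by
  have hL : ((2 * p + 2 * q)! : ℚ) / ((2 * p)! * (2 * q)!)
      = ((2 * (p + q)).choose (2 * q) : ℚ) := by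
    rw [Nat.cast_choose ℚ (by omega : 2 * q ≤ 2 * (p + q)),
      show 2 * (p + q) - 2 * q = 2 * p by omega,
      show 2 * (p + q) = 2 * p + 2 * q by ring, mul_comm (((2 * q)! : ℚ))]
  rw [hL, lemA (p + q) q (by omega)]
  push_cast
  refine Finset.sum_congr rfl fun k hk => ?_
  simp only [Finset.mem_range] at hk
  have hk' : k ≤ q := by omega
  rw [Nat.cast_choose ℚ (by omega : q + k ≤ p + q),
    Nat.cast_choose ℚ (by omega : 2 * k ≤ q + k),
    show p + q - (q + k) = p - k by omega,
    show q + k - 2 * k = q - k by omega]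
  have h1 : ((q + k)! : ℚ) ≠ 0 := by positivity
  have h2 : ((p - k)! : ℚ) ≠ 0 := by positivity
  have h3 : ((q - k)! : ℚ) ≠ 0 := by positivity
  have h4 : ((2 * k)! : ℚ) ≠ 0 := by positivity
  field_simp
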